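/- The image in SL((𝔽_2)^{A_d}) of the group generated by the mod-2 reductions of the operators L_p, p ∈ A_d, is the full group of linear automorphisms of (𝔽_2)^{A_d} preserving the set E = {ē*} ∪ {ē_p : p ∈ A_d}, and this group is isomorphic to the symmetric group on d+1 letters. -/

import Mathlib

open Matrix

/-- The matrix of the operator `L_p`. -/
def L (d : ℕ) (p : Fin d) : Matrix (Fin d) (Fin d) ℤ :=
  Matrix.of fun r q => if q = p then (if r < p then -1 else 1) else (if r = q then 1 else 0)

/-- The mod 2 reduction `L̄_p` of `L_p`. -/
def Lbar (d : ℕ) (p : Fin d) : Matrix (Fin d) (Fin d) (ZMod 2) :=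
  (L d p).map (Int.cast : ℤ → ZMod 2)

/-- The set `E = {ē*} ∪ {ē_p : p ∈ A_d}` in `(𝔽₂)^{A_d}`, where `ē* = Σ_p ē_p`. -/
def Eset (d : ℕ) : Set (Fin d → ZMod 2) :=
  insert (fun _ => 1) (Set.range fun p : Fin d => Pi.single p (1 : ZMod 2))

namespace LbarAux

variable (d : ℕ)

/-- enumeration of `E` -/
def iota (i : Fin (d + 1)) : Fin d → ZMod 2 :=
  if h : (i : ℕ) < d then Pi.single ⟨i, h⟩ 1 else fun _ => 1

lemma iota_castSucc (q : Fin d) : iota d q.castSucc = Pi.single q 1 := by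
  simp [iota, q.isLt]

lemma iota_last : iota d (Fin.last d) = fun _ => 1 := by
  simp [iota]

lemma range_iota : Set.range (iota d) = Eset d := by
  ext v
  constructor
  · rintro ⟨i, rfl⟩
    induction i using Fin.lastCases with
    | last => rw [iota_last]; exact Set.mem_insert _ _
    | cast q => rw [iota_castSucc]; exact Set.mem_insert_of_mem _ ⟨q, rfl⟩
  · rintro (rfl | ⟨q, rfl⟩)
    · exact ⟨Fin.last d, iota_last d⟩
    · exact ⟨q.castSucc, iota_castSucc d q⟩

lemma iota_inj (hd : 2 ≤ d) : Function.Injective (iota d) := by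
  intro i j hij
  induction i using Fin.lastCases with
  | last =>
    induction j using Fin.lastCases with
    | last => rfl
    | cast q =>
      exfalso
      rw [iota_last, iota_castSucc] at hij
      have : Nontrivial (Fin d) := Fin.nontrivial_iff_two_le.mpr hd
      rcases exists_ne q with ⟨r, hr⟩
      have h2 := congrFun hij r
      rw [Pi.single_eq_of_ne hr] at h2
      exact one_ne_zero h2
  | cast q =>
    induction j using Fin.lastCases with
    | last =>
      exfalso
      rw [iota_last, iota_castSucc] at hij
      have : Nontrivial (Fin d) := Fin.nontrivial_iff_two_le.mpr hd
      rcases exists_ne q with ⟨r, hr⟩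
      have h2 := congrFun hij r
      rw [Pi.single_eq_of_ne hr] at h2
      exact one_ne_zero h2.symm
    | cast q' =>
      rw [iota_castSucc, iota_castSucc] at hij
      have : q = q' := by
        by_contra h
        have h2 := congrFun hij q
        rw [Pi.single_eq_same, Pi.single_eq_of_ne h] at h2
        exact one_ne_zero h2
      exact congrArg Fin.castSucc this

/-- matrix associated to a permutation of `Fin (d+1)` -/
def Mσ (σ : Equiv.Perm (Fin (d + 1))) : Matrix (Fin d) (Fin d) (ZMod 2) :=
  Matrix.of fun r q => iota d (σ q.castSucc) r

lemma sum_iota : ∑ i : Fin (d + 1), iota d i = 0 := by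
  rw [Fin.sum_univ_castSucc]
  funext r
  simp only [Pi.add_apply, Finset.sum_apply, Pi.zero_apply, iota_last]
  simp only [iota_castSucc]
  rw [Fintype.sum_pi_single r (fun _ => (1 : ZMod 2))]
  exact (by decide : (1 : ZMod 2) + 1 = 0)

lemma sum_iota_perm (σ : Equiv.Perm (Fin (d + 1))) :
    ∑ q : Fin d, iota d (σ q.castSucc) = iota d (σ (Fin.last d)) := by
  have h : ∑ i : Fin (d + 1), iota d (σ i) = 0 := by
    rw [Equiv.sum_comp σ (iota d)]; exact sum_iota d
  rw [Fin.sum_univ_castSucc] at h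
  funext r
  have := congrFun h r
  simp only [Pi.add_apply, Finset.sum_apply, Pi.zero_apply] at this ⊢
  have h2 : ∀ a b : ZMod 2, a + b = 0 → a = b := by decide
  exact h2 _ _ this

lemma Mσ_mulVec_iota (σ : Equiv.Perm (Fin (d + 1))) (i : Fin (d + 1)) :
    (Mσ d σ).mulVec (iota d i) = iota d (σ i) := by
  induction i using Fin.lastCases with
  | last =>
    rw [iota_last]
    funext r
    simp only [mulVec, dotProduct, Mσ, Matrix.of_apply, mul_one]
    have := congrFun (sum_iota_perm d σ) r
    simpa using this
  | cast q =>
    rw [iota_castSucc]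
    funext r
    simp [mulVec_single, Mσ]

lemma Mσ_one : Mσ d 1 = 1 := by
  ext r q
  simp [Mσ, iota_castSucc, Matrix.one_apply, Pi.single_apply, eq_comm]

lemma Mσ_mul (σ τ : Equiv.Perm (Fin (d + 1))) : Mσ d (σ * τ) = Mσ d σ * Mσ d τ := by
  ext r q
  have h := congrFun (Mσ_mulVec_iota d σ (τ q.castSucc)) r
  simp only [Mσ, Matrix.of_apply, Matrix.mul_apply, Equiv.Perm.mul_apply]
  rw [← h]
  simp [mulVec, dotProduct, Mσ, mul_comm]

end LbarAux

namespace LbarAux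

def Phi (d : ℕ) : Equiv.Perm (Fin (d + 1)) →* (Matrix (Fin d) (Fin d) (ZMod 2))ˣ where
  toFun σ := ⟨Mσ d σ, Mσ d σ⁻¹, by rw [← Mσ_mul, mul_inv_cancel, Mσ_one],
    by rw [← Mσ_mul, inv_mul_cancel, Mσ_one]⟩
  map_one' := Units.ext (Mσ_one d)
  map_mul' σ τ := Units.ext (Mσ_mul d σ τ)

variable (d : ℕ)

lemma Phi_injective (hd : 2 ≤ d) : Function.Injective (Phi d) := by
  intro σ τ h
  have hv : Mσ d σ = Mσ d τ := congrArg Units.val h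
  ext i
  have key : iota d (σ i) = iota d (τ i) := by
    rw [← Mσ_mulVec_iota d σ i, ← Mσ_mulVec_iota d τ i, hv]
  exact congrArg Fin.val (iota_inj d hd key)

lemma Phi_image_Eset (σ : Equiv.Perm (Fin (d + 1))) :
    (fun v => ((Phi d σ : Matrix (Fin d) (Fin d) (ZMod 2))).mulVec v) '' Eset d = Eset d := by
  rw [← range_iota]
  ext v
  constructor
  · rintro ⟨-, ⟨i, rfl⟩, rfl⟩
    exact ⟨σ i, (Mσ_mulVec_iota d σ i).symm⟩
  · rintro ⟨i, rfl⟩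
    refine ⟨iota d (σ⁻¹ i), ⟨σ⁻¹ i, rfl⟩, ?_⟩
    show (Mσ d σ).mulVec (iota d (σ⁻¹ i)) = iota d i
    rw [Mσ_mulVec_iota d σ (σ⁻¹ i), ← Equiv.Perm.mul_apply, mul_inv_cancel, Equiv.Perm.one_apply]

lemma mem_range_of_stab (hd : 2 ≤ d) (u : (Matrix (Fin d) (Fin d) (ZMod 2))ˣ)
    (hu : (fun v => (u : Matrix (Fin d) (Fin d) (ZMod 2)).mulVec v) '' Eset d = Eset d) :
    ∃ σ, Phi d σ = u := by
  have hmem : ∀ i : Fin (d + 1), ∃ j, iota d j = (u : Matrix (Fin d) (Fin d) (ZMod 2)).mulVec (iota d i) := by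
    intro i
    have : (u : Matrix (Fin d) (Fin d) (ZMod 2)).mulVec (iota d i) ∈ Eset d := by
      rw [← hu]; exact ⟨iota d i, by rw [← range_iota]; exact ⟨i, rfl⟩, rfl⟩
    rw [← range_iota] at this
    obtain ⟨j, hj⟩ := this
    exact ⟨j, hj⟩
  choose f hf using hmem
  have hinj : Function.Injective f := by
    intro i j hij
    apply iota_inj d hd
    have h1 := hf i
    have h2 := hf j
    rw [hij] at h1
    have : (u : Matrix (Fin d) (Fin d) (ZMod 2)).mulVec (iota d i)
        = (u : Matrix (Fin d) (Fin d) (ZMod 2)).mulVec (iota d j) := by rw [← h1, ← h2]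
    have hcancel := congrArg ((u⁻¹ : (Matrix (Fin d) (Fin d) (ZMod 2))ˣ) : Matrix (Fin d) (Fin d) (ZMod 2)).mulVec this
    rwa [Matrix.mulVec_mulVec, Matrix.mulVec_mulVec, ← Units.val_mul, inv_mul_cancel,
      Units.val_one, Matrix.one_mulVec, Matrix.one_mulVec] at hcancel
  let σ : Equiv.Perm (Fin (d + 1)) := Equiv.ofBijective f (Finite.injective_iff_bijective.mp hinj)
  refine ⟨σ, Units.ext ?_⟩
  ext r q
  show iota d (σ q.castSucc) r = _
  have := congrFun (hf q.castSucc) r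
  rw [show σ q.castSucc = f q.castSucc from rfl, this, iota_castSucc]
  simp [mulVec_single]

lemma Lbar_eq_Mσ_swap (p : Fin d) :
    Lbar d p = Mσ d (Equiv.swap p.castSucc (Fin.last d)) := by
  ext r q
  simp only [Lbar, L, Matrix.map_apply, Matrix.of_apply, Mσ, Matrix.of_apply]
  by_cases hq : q = p
  · subst hq
    rw [Equiv.swap_apply_left, iota_last, if_pos rfl]
    split <;> simp <;> decide
  · have h1 : q.castSucc ≠ p.castSucc := by
      simp [Fin.castSucc_inj, hq]
    have h2 : q.castSucc ≠ Fin.last d := Fin.castSucc_lt_last q |>.ne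
    rw [Equiv.swap_apply_of_ne_of_ne h1 h2, iota_castSucc]
    rw [if_neg hq]
    by_cases hr : r = q <;> simp [hr, Pi.single_apply]

lemma star_swaps_generate :
    Subgroup.closure (Set.range fun p : Fin d => Equiv.swap p.castSucc (Fin.last d)) = ⊤ := by
  rw [eq_top_iff, ← Equiv.Perm.closure_isSwap, Subgroup.closure_le]
  rintro - ⟨a, b, hab, rfl⟩
  by_cases ha : a = Fin.last d
  · subst ha
    obtain ⟨q, rfl⟩ : ∃ q : Fin d, b = q.castSucc :=
      ⟨⟨b, Fin.val_lt_last (Ne.symm hab)⟩, by simp [Fin.castSucc]⟩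
    rw [Equiv.swap_comm]
    exact Subgroup.subset_closure ⟨q, rfl⟩
  · obtain ⟨q, rfl⟩ : ∃ q : Fin d, a = q.castSucc :=
      ⟨⟨a, Fin.val_lt_last ha⟩, by simp [Fin.castSucc]⟩
    by_cases hb : b = Fin.last d
    · subst hb
      exact Subgroup.subset_closure ⟨q, rfl⟩
    · obtain ⟨q', rfl⟩ : ∃ q' : Fin d, b = q'.castSucc :=
        ⟨⟨b, Fin.val_lt_last hb⟩, by simp [Fin.castSucc]⟩
      have key := Equiv.swap_mul_swap_mul_swap (x := q'.castSucc) (y := Fin.last d)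
        (z := q.castSucc) hb (Ne.symm hab)
      rw [show Equiv.swap q.castSucc q'.castSucc = _ from key.symm]
      have hq : Equiv.swap (Fin.last d) q.castSucc ∈
          Subgroup.closure (Set.range fun p : Fin d => Equiv.swap p.castSucc (Fin.last d)) := by
        rw [Equiv.swap_comm]; exact Subgroup.subset_closure ⟨q, rfl⟩
      have hq' : Equiv.swap q'.castSucc (Fin.last d) ∈
          Subgroup.closure (Set.range fun p : Fin d => Equiv.swap p.castSucc (Fin.last d)) :=
        Subgroup.subset_closure ⟨q', rfl⟩
      exact mul_mem (mul_mem hq hq') hq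

lemma closure_eq_range :
    Subgroup.closure {u : (Matrix (Fin d) (Fin d) (ZMod 2))ˣ |
        ∃ p : Fin d, (u : Matrix (Fin d) (Fin d) (ZMod 2)) = Lbar d p} = (Phi d).range := by
  have himg : (Phi d) '' (Set.range fun p : Fin d => Equiv.swap p.castSucc (Fin.last d))
      = {u : (Matrix (Fin d) (Fin d) (ZMod 2))ˣ |
        ∃ p : Fin d, (u : Matrix (Fin d) (Fin d) (ZMod 2)) = Lbar d p} := by
    ext u
    constructor
    · rintro ⟨-, ⟨p, rfl⟩, rfl⟩
      exact ⟨p, (Lbar_eq_Mσ_swap d p).symm⟩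
    · rintro ⟨p, hp⟩
      exact ⟨Equiv.swap p.castSucc (Fin.last d), ⟨p, rfl⟩,
        Units.ext (by rw [hp, Lbar_eq_Mσ_swap]; rfl)⟩
  rw [← himg, ← MonoidHom.map_closure, star_swaps_generate, ← MonoidHom.range_eq_map]

end LbarAux

/-- The group generated by the mod-2 reductions of the `L_p` is the full group of
linear automorphisms of `(𝔽₂)^{A_d}` preserving the set `E = {ē*} ∪ {ē_p}`, and it is
isomorphic to the symmetric group on `d+1` letters. -/
theorem Lbar_group_eq_stabilizer_of_E (d : ℕ) (hd : 2 ≤ d) :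
    ((Subgroup.closure {u : (Matrix (Fin d) (Fin d) (ZMod 2))ˣ |
        ∃ p : Fin d, (u : Matrix (Fin d) (Fin d) (ZMod 2)) = Lbar d p} : Subgroup _) : Set _) =
      {u : (Matrix (Fin d) (Fin d) (ZMod 2))ˣ |
        (fun v => (u : Matrix (Fin d) (Fin d) (ZMod 2)).mulVec v) '' Eset d = Eset d} ∧
    Nonempty ((Subgroup.closure {u : (Matrix (Fin d) (Fin d) (ZMod 2))ˣ |
        ∃ p : Fin d, (u : Matrix (Fin d) (Fin d) (ZMod 2)) = Lbar d p}) ≃* Equiv.Perm (Fin (d + 1))) := by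
  have hcr := LbarAux.closure_eq_range d
  constructor
  · rw [hcr]
    ext u
    constructor
    · rintro ⟨σ, rfl⟩
      exact LbarAux.Phi_image_Eset d σ
    · intro hu
      exact LbarAux.mem_range_of_stab d hd u hu
  · refine ⟨?_⟩
    rw [hcr]
    exact ((MonoidHom.ofInjective (LbarAux.Phi_injective d hd)).symm)
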